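/- For all reals ε and p with 0 < ε < p² ≤ 1 there exists n₀ = n₀(ε,p) such that the following holds. Let G be a bipartite graph with bipartition (X,Y), |X| = |Y| = n, where 2n > n₀ and every edge of G joins X to Y, and suppose the pair (X,Y) is ε-regular with density p. Then (1−3√ε)·n·log(pn) ≤ log NM(G,√ε) ≤ (1+3√ε)·n·log(pn). -/

import Mathlib

open Finset

/-- `M` (a finset of edges) is a matching of `G`: every element is an edge of `G` and distinct
elements of `M` share no endpoint. -/
def IsMatchingFinset {V : Type*} (G : SimpleGraph V) (M : Finset (Sym2 V)) : Prop :=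
  (∀ e ∈ M, e ∈ G.edgeSet) ∧
    ∀ e ∈ M, ∀ f ∈ M, e ≠ f → ∀ v : V, ¬(v ∈ e ∧ v ∈ f)

/-- `M` is a maximal matching of `G`: every edge of `G` shares an endpoint with some edge
of `M`. -/
def IsMaximalMatchingFinset {V : Type*} (G : SimpleGraph V) (M : Finset (Sym2 V)) : Prop :=
  IsMatchingFinset G M ∧ ∀ e ∈ G.edgeSet, ∃ f ∈ M, ∃ v : V, v ∈ e ∧ v ∈ f

/-- The number of vertices covered by the edges in `M`. -/
noncomputable def coveredCard {V : Type*} (M : Finset (Sym2 V)) : ℕ :=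
  Set.ncard {v : V | ∃ e ∈ M, v ∈ e}

/-- `NM G ε` is the number of maximal `ε`-near perfect matchings of `G`, i.e. maximal matchings
covering at least `(1-ε)|V(G)|` vertices. -/
noncomputable def NM (V : Type*) [Fintype V] (G : SimpleGraph V) (ε : ℝ) : ℕ :=
  Nat.card {M : Finset (Sym2 V) // IsMaximalMatchingFinset G M ∧
    (1 - ε) * (Fintype.card V : ℝ) ≤ (coveredCard M : ℝ)}

set_option linter.unusedSectionVars false
set_option maxHeartbeats 1000000

namespace NPM

variable {V : Type} [Fintype V] [DecidableEq V] (G : SimpleGraph V) [DecidableRel G.Adj]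
  (X Y : Finset V)

/-- Good sequences of `k` edge-pairs forming a partial matching from `X` to `Y`. -/
def Good (k : ℕ) (s : Fin k → V × V) : Prop :=
  (∀ i, (s i).1 ∈ X ∧ (s i).2 ∈ Y ∧ G.Adj (s i).1 (s i).2) ∧
    ∀ i j, i ≠ j → (s i).1 ≠ (s j).1 ∧ (s i).2 ≠ (s j).2

instance (k : ℕ) : DecidablePred (Good G X Y k) := fun _ => by
  unfold Good; infer_instance

noncomputable def seqFinset (k : ℕ) : Finset (Fin k → V × V) :=
  Finset.univ.filter (Good G X Y k)

lemma seqFinset_zero_card : (seqFinset G X Y 0).card = 1 := by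
  rw [seqFinset, Finset.filter_true_of_mem, Finset.card_univ]
  · simp
  · intro s _
    exact ⟨fun i => i.elim0, fun i => i.elim0⟩

lemma step_card (k m : ℕ)
    (hB : ∀ X' ⊆ X, ∀ Y' ⊆ Y, X'.card = X.card - k → Y'.card = Y.card - k →
      m ≤ (Rel.interedges G.Adj X' Y').card) :
    (seqFinset G X Y k).card * m ≤ (seqFinset G X Y (k + 1)).card := by
  classical
  have := Finset.card_mul_le_card_mul
    (r := fun (a : Fin k → V × V) (b : Fin (k+1) → V × V) => ∀ i : Fin k, b i.castSucc = a i)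
    (s := seqFinset G X Y k) (t := seqFinset G X Y (k+1)) (m := m) (n := 1)
    ?_ ?_
  · simpa using this
  · -- every good k-sequence has at least m extensions
    intro a ha
    rw [seqFinset, Finset.mem_filter] at ha
    obtain ⟨-, ha⟩ := ha
    set A : Finset V := Finset.image (fun i => (a i).1) Finset.univ with hA
    set B : Finset V := Finset.image (fun i => (a i).2) Finset.univ with hBdef
    have hAX : A ⊆ X := by
      intro v hv
      simp only [hA, Finset.mem_image] at hv
      obtain ⟨i, -, rfl⟩ := hv
      exact (ha.1 i).1
    have hBY : B ⊆ Y := by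
      intro v hv
      simp only [hBdef, Finset.mem_image] at hv
      obtain ⟨i, -, rfl⟩ := hv
      exact (ha.1 i).2.1
    have hAcard : A.card = k := by
      rw [hA, Finset.card_image_of_injective _ ?_, Finset.card_univ, Fintype.card_fin]
      intro i j hij
      by_contra hne
      exact (ha.2 i j hne).1 hij
    have hBcard : B.card = k := by
      rw [hBdef, Finset.card_image_of_injective _ ?_, Finset.card_univ, Fintype.card_fin]
      intro i j hij
      by_contra hne
      exact (ha.2 i j hne).2 hij
    have hm : m ≤ (Rel.interedges G.Adj (X \ A) (Y \ B)).card := by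
      refine hB _ (Finset.sdiff_subset) _ (Finset.sdiff_subset) ?_ ?_
      · rw [Finset.card_sdiff_of_subset hAX, hAcard]
      · rw [Finset.card_sdiff_of_subset hBY, hBcard]
    refine hm.trans ?_
    refine Finset.card_le_card_of_injOn (fun e => Fin.snoc a e) ?_ ?_
    · intro e he
      rw [Finset.mem_coe, Rel.mem_interedges_iff] at he
      obtain ⟨he1, he2, hadj⟩ := he
      rw [Finset.mem_sdiff] at he1 he2
      rw [Finset.mem_coe, Finset.mem_bipartiteAbove, seqFinset, Finset.mem_filter]
      refine ⟨⟨Finset.mem_univ _, ?_, ?_⟩, ?_⟩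
      · intro i
        refine Fin.lastCases ?_ ?_ i
        · simpa [Fin.snoc_last] using ⟨he1.1, he2.1, hadj⟩
        · intro j
          simpa [Fin.snoc_castSucc] using ha.1 j
      · intro i j
        refine Fin.lastCases ?_ ?_ i
        · refine Fin.lastCases ?_ ?_ j
          · intro hij; exact absurd rfl hij
          · intro j' _
            simp only [Fin.snoc_last, Fin.snoc_castSucc]
            constructor
            · intro hc
              exact he1.2 (by rw [hc]; exact Finset.mem_image_of_mem _ (Finset.mem_univ j'))
            · intro hc
              exact he2.2 (by rw [hc]; exact Finset.mem_image_of_mem _ (Finset.mem_univ j'))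
        · intro i'
          refine Fin.lastCases ?_ ?_ j
          · intro _
            simp only [Fin.snoc_last, Fin.snoc_castSucc]
            constructor
            · intro hc
              exact he1.2 (by rw [← hc]; exact Finset.mem_image_of_mem _ (Finset.mem_univ i'))
            · intro hc
              exact he2.2 (by rw [← hc]; exact Finset.mem_image_of_mem _ (Finset.mem_univ i'))
          · intro j' hij
            simp only [Fin.snoc_castSucc]
            exact ha.2 i' j' (fun hc => hij (by rw [hc]))
      · intro i
        simp [Fin.snoc_castSucc]
    · intro e he e' he' hee
      have := congrFun hee (Fin.last k)
      simpa [Fin.snoc_last] using this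
  · -- each extension restricts to exactly one sequence
    intro b hb
    refine Finset.card_le_one.mpr ?_
    intro a1 h1 a2 h2
    rw [Finset.mem_bipartiteBelow] at h1 h2
    funext i
    rw [← h1.2 i, ← h2.2 i]


lemma chain_card (t : ℕ) (m : ℕ → ℕ)
    (hB : ∀ k < t, ∀ X' ⊆ X, ∀ Y' ⊆ Y, X'.card = X.card - k → Y'.card = Y.card - k →
      m k ≤ (Rel.interedges G.Adj X' Y').card) :
    (∏ k ∈ Finset.range t, m k) ≤ (seqFinset G X Y t).card := by
  induction t with
  | zero => simp [seqFinset_zero_card]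
  | succ t ih =>
    rw [Finset.prod_range_succ]
    calc (∏ k ∈ Finset.range t, m k) * m t
        ≤ (seqFinset G X Y t).card * m t := by
          exact Nat.mul_le_mul_right _ (ih (fun k hk => hB k (Nat.lt_succ_of_lt hk)))
      _ ≤ (seqFinset G X Y (t + 1)).card :=
          step_card G X Y t (m t) (hB t (Nat.lt_succ_self t))

variable {G X Y}

/-- every `Sym2` contains some vertex -/
lemma sym2_exists_mem (e : Sym2 V) : ∃ v : V, v ∈ e := by
  induction e using Sym2.inductionOn with
  | hf x y => exact ⟨x, Sym2.mem_mk_left x y⟩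

lemma good_mk_eq (hXY : Disjoint X Y) {k : ℕ} {s : Fin k → V × V}
    (hs : Good G X Y k s) {i j : Fin k}
    (h : Sym2.mk (s i).1 (s i).2 = Sym2.mk (s j).1 (s j).2) : i = j := by
  rcases Sym2.mk_eq_mk_iff.mp h with h' | h'
  · by_contra hne
    exact (hs.2 i j hne).1 (congrArg Prod.fst h')
  · -- swap case: (s i).1 = (s j).2 ∈ Y, but (s i).1 ∈ X
    have h1 : (s i).1 = (s j).2 := congrArg Prod.fst h'
    have := Finset.disjoint_left.mp hXY (hs.1 i).1
    exact absurd ((h1 ▸ (hs.1 j).2.1)) this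

lemma good_matching (hXY : Disjoint X Y) {k : ℕ} {s : Fin k → V × V}
    (hs : Good G X Y k s) :
    IsMatchingFinset G (Finset.image (fun i => Sym2.mk (s i).1 (s i).2) Finset.univ) := by
  constructor
  · intro e he
    rw [Finset.mem_image] at he
    obtain ⟨i, -, rfl⟩ := he
    exact (hs.1 i).2.2
  · intro e he f hf hef v hv
    rw [Finset.mem_image] at he hf
    obtain ⟨i, -, rfl⟩ := he
    obtain ⟨j, -, rfl⟩ := hf
    have hij : i ≠ j := fun h => hef (by rw [h])
    obtain ⟨hv1, hv2⟩ := hv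
    rw [Sym2.mem_iff] at hv1 hv2
    have hX := Finset.disjoint_left.mp hXY
    rcases hv1 with rfl | rfl <;> rcases hv2 with h2 | h2
    · exact (hs.2 i j hij).1 h2
    · exact hX (hs.1 i).1 (h2 ▸ (hs.1 j).2.1)
    · exact hX (hs.1 j).1 (h2.symm ▸ (hs.1 i).2.1)
    · exact (hs.2 i j hij).2 h2

lemma exists_maximal (M₀ : Finset (Sym2 V)) (h : IsMatchingFinset G M₀) :
    ∃ M, IsMaximalMatchingFinset G M ∧ M₀ ⊆ M := by
  classical
  set A : Finset (Finset (Sym2 V)) :=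
    Finset.univ.filter (fun M => IsMatchingFinset G M ∧ M₀ ⊆ M) with hA
  have hne : A.Nonempty := ⟨M₀, by simp [hA, h]⟩
  obtain ⟨M, hM, hmax⟩ := Finset.exists_max_image A Finset.card hne
  rw [hA, Finset.mem_filter] at hM
  refine ⟨M, ⟨hM.2.1, ?_⟩, hM.2.2⟩
  intro e he
  by_contra hc
  push_neg at hc
  have heM : e ∉ M := by
    intro hmem
    obtain ⟨v, hv⟩ := sym2_exists_mem e
    exact hc e hmem v hv hv
  have hins : insert e M ∈ A := by
    rw [hA, Finset.mem_filter]
    refine ⟨Finset.mem_univ _, ⟨?_, ?_⟩, hM.2.2.trans (Finset.subset_insert _ _)⟩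
    · intro f hf
      rcases Finset.mem_insert.mp hf with rfl | hf
      · exact he
      · exact hM.2.1.1 f hf
    · intro f hf g hg hfg v hv
      rcases Finset.mem_insert.mp hf with hfe | hf <;>
        rcases Finset.mem_insert.mp hg with hge | hg
      · exact hfg (hfe.trans hge.symm)
      · exact hc g hg v (hfe ▸ hv.1) hv.2
      · exact hc f hf v (hge ▸ hv.2) hv.1
      · exact hM.2.1.2 f hf g hg hfg v hv
  have := hmax _ hins
  rw [Finset.card_insert_of_notMem heM] at this
  omega

lemma matching_card_le
    (hadj : ∀ u v : V, G.Adj u v → (u ∈ X ∧ v ∈ Y) ∨ (u ∈ Y ∧ v ∈ X))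
    {M : Finset (Sym2 V)} (hM : IsMatchingFinset G M) : M.card ≤ X.card := by
  classical
  have hx : ∀ e ∈ M, ∃ v, v ∈ e ∧ v ∈ X := by
    intro e he
    have hedge := hM.1 e he
    induction e using Sym2.inductionOn with
    | hf a b =>
      rw [SimpleGraph.mem_edgeSet] at hedge
      rcases hadj a b hedge with ⟨ha, -⟩ | ⟨-, hb⟩
      · exact ⟨a, Sym2.mem_mk_left a b, ha⟩
      · exact ⟨b, Sym2.mem_mk_right a b, hb⟩
  refine Finset.card_le_card_of_injOn
    (fun e => if h : ∃ v, v ∈ e ∧ v ∈ X then h.choose else (Quot.out e).1) ?_ ?_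
  · intro e he
    dsimp only
    rw [dif_pos (hx e he)]
    exact (hx e he).choose_spec.2
  · intro e he e' he' heq
    simp only [Finset.mem_coe] at he he'
    by_contra hne
    dsimp only at heq
    rw [dif_pos (hx e he), dif_pos (hx e' he')] at heq
    refine hM.2 e he e' he' hne (hx e he).choose
      ⟨(hx e he).choose_spec.1, ?_⟩
    rw [heq]
    exact (hx e' he').choose_spec.1


lemma fiber_card_le (hXY : Disjoint X Y) (t : ℕ) (M : Finset (Sym2 V)) :
    ((seqFinset G X Y t).filter (fun s => ∀ i, Sym2.mk (s i).1 (s i).2 ∈ M)).card ≤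
      M.card.descFactorial t := by
  classical
  set fib := (seqFinset G X Y t).filter (fun s => ∀ i, Sym2.mk (s i).1 (s i).2 ∈ M) with hfib
  have key : ∀ s : {x // x ∈ fib}, Good G X Y t s.1 ∧ ∀ i, Sym2.mk (s.1 i).1 (s.1 i).2 ∈ M := by
    rintro ⟨s, hs⟩
    rw [hfib, Finset.mem_filter] at hs
    obtain ⟨hs1, hs2⟩ := hs
    rw [seqFinset, Finset.mem_filter] at hs1
    exact ⟨hs1.2, hs2⟩
  let F : {x // x ∈ fib} → (Fin t ↪ {e // e ∈ M}) := fun s =>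
    ⟨fun i => ⟨Sym2.mk (s.1 i).1 (s.1 i).2, (key s).2 i⟩, by
      intro i j hij
      exact good_mk_eq hXY (key s).1 (congrArg Subtype.val hij)⟩
  have hFinj : Function.Injective F := by
    rintro ⟨s, hs⟩ ⟨s', hs'⟩ h
    have h' : ∀ i, Sym2.mk (s i).1 (s i).2 = Sym2.mk (s' i).1 (s' i).2 := by
      intro i
      exact congrArg Subtype.val (congrFun (congrArg DFunLike.coe h) i)
    apply Subtype.ext
    funext i
    have hXmem := (key ⟨s, hs⟩).1.1 i
    have hX'mem := (key ⟨s', hs'⟩).1.1 i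
    rcases Sym2.mk_eq_mk_iff.mp (h' i) with he | he
    · exact he
    · exfalso
      have h1 : (s i).1 = (s' i).2 := congrArg Prod.fst he
      exact Finset.disjoint_left.mp hXY hXmem.1 (h1 ▸ hX'mem.2.1)
  calc fib.card = Fintype.card {x // x ∈ fib} := (Fintype.card_coe fib).symm
    _ ≤ Fintype.card (Fin t ↪ {e // e ∈ M}) := Fintype.card_le_of_injective F hFinj
    _ = (Fintype.card {e // e ∈ M}).descFactorial (Fintype.card (Fin t)) :=
        Fintype.card_embedding_eq
    _ = M.card.descFactorial t := by rw [Fintype.card_coe, Fintype.card_fin]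

lemma covered_ge (hXY : Disjoint X Y) {t : ℕ} {s : Fin t → V × V}
    (hs : Good G X Y t s) {M : Finset (Sym2 V)}
    (hsub : ∀ i, Sym2.mk (s i).1 (s i).2 ∈ M) : 2 * t ≤ coveredCard M := by
  classical
  set A : Finset V := Finset.image (fun i => (s i).1) Finset.univ with hA
  set B : Finset V := Finset.image (fun i => (s i).2) Finset.univ with hB
  have hAX : A ⊆ X := by
    intro v hv; simp only [hA, Finset.mem_image] at hv
    obtain ⟨i, -, rfl⟩ := hv; exact (hs.1 i).1
  have hBY : B ⊆ Y := by
    intro v hv; simp only [hB, Finset.mem_image] at hv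
    obtain ⟨i, -, rfl⟩ := hv; exact (hs.1 i).2.1
  have hAcard : A.card = t := by
    rw [hA, Finset.card_image_of_injective _ ?_, Finset.card_univ, Fintype.card_fin]
    intro i j hij; by_contra hne; exact (hs.2 i j hne).1 hij
  have hBcard : B.card = t := by
    rw [hB, Finset.card_image_of_injective _ ?_, Finset.card_univ, Fintype.card_fin]
    intro i j hij; by_contra hne; exact (hs.2 i j hne).2 hij
  have hdisj : Disjoint A B := hXY.mono hAX hBY
  have hsubset : ((A ∪ B : Finset V) : Set V) ⊆ {v : V | ∃ e ∈ M, v ∈ e} := by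
    intro v hv
    simp only [Finset.coe_union, Set.mem_union, Finset.mem_coe] at hv
    rcases hv with hv | hv
    · rw [hA, Finset.mem_image] at hv
      obtain ⟨i, -, rfl⟩ := hv
      exact ⟨Sym2.mk (s i).1 (s i).2, hsub i, Sym2.mem_mk_left _ _⟩
    · rw [hB, Finset.mem_image] at hv
      obtain ⟨i, -, rfl⟩ := hv
      exact ⟨Sym2.mk (s i).1 (s i).2, hsub i, Sym2.mem_mk_right _ _⟩
  calc 2 * t = (A ∪ B).card := by
        rw [Finset.card_union_of_disjoint hdisj, hAcard, hBcard]; ring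
    _ = ((A ∪ B : Finset V) : Set V).ncard := (Set.ncard_coe_finset _).symm
    _ ≤ coveredCard M := Set.ncard_le_ncard hsubset (Set.toFinite _)


lemma matching_share_eq {M : Finset (Sym2 V)} (hM : IsMatchingFinset G M)
    {e f : Sym2 V} (he : e ∈ M) (hf : f ∈ M) {v : V} (hve : v ∈ e) (hvf : v ∈ f) :
    e = f := by
  by_contra hne
  exact hM.2 e he f hf hne v ⟨hve, hvf⟩

lemma NM_le (hadj : ∀ u v : V, G.Adj u v → (u ∈ X ∧ v ∈ Y) ∨ (u ∈ Y ∧ v ∈ X))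
    (ε : ℝ) : NM V G ε ≤ (Y.card + 1) ^ X.card := by
  classical
  set T := {M : Finset (Sym2 V) // IsMaximalMatchingFinset G M ∧
    (1 - ε) * (Fintype.card V : ℝ) ≤ (coveredCard M : ℝ)} with hT
  let Ψ : T → ({x // x ∈ X} → Option {y // y ∈ Y}) := fun M x =>
    if h : ∃ y, y ∈ Y ∧ Sym2.mk x.1 y ∈ M.1 then
      some ⟨h.choose, h.choose_spec.1⟩ else none
  have claim : ∀ (M M' : T), Ψ M = Ψ M' → ∀ a b : V, a ∈ X → b ∈ Y →
      Sym2.mk a b ∈ M.1 → Sym2.mk a b ∈ M'.1 := by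
    intro M M' hΨ a b ha hb hmem
    have h : ∃ y, y ∈ Y ∧ Sym2.mk a y ∈ M.1 := ⟨b, hb, hmem⟩
    have happ := congrFun hΨ ⟨a, ha⟩
    simp only [Ψ, dif_pos h] at happ
    have h' : ∃ y, y ∈ Y ∧ Sym2.mk a y ∈ M'.1 := by
      by_contra hc
      rw [dif_neg hc] at happ
      exact Option.some_ne_none _ happ
    rw [dif_pos h'] at happ
    have hval : h.choose = h'.choose := by
      have := Option.some_injective _ happ
      exact congrArg Subtype.val this
    have heq : Sym2.mk a b = Sym2.mk a h.choose :=
      matching_share_eq M.2.1.1 hmem h.choose_spec.2 (Sym2.mem_mk_left a b)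
        (Sym2.mem_mk_left a _)
    rw [heq, hval]
    exact h'.choose_spec.2
  have hΨinj : Function.Injective Ψ := by
    intro M M' hΨ
    have hsub : ∀ (N N' : T), Ψ N = Ψ N' → N.1 ⊆ N'.1 := by
      intro N N' hNN e he
      have hedge := N.2.1.1.1 e he
      induction e using Sym2.inductionOn with
      | hf a b =>
        rw [SimpleGraph.mem_edgeSet] at hedge
        rcases hadj a b hedge with ⟨ha, hb⟩ | ⟨ha, hb⟩
        · exact claim N N' hNN a b ha hb he
        · rw [Sym2.eq_swap] at he ⊢
          exact claim N N' hNN b a hb ha he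
    exact Subtype.ext (Finset.Subset.antisymm (hsub M M' hΨ) (hsub M' M hΨ.symm))
  calc NM V G ε = Nat.card T := rfl
    _ ≤ Nat.card ({x // x ∈ X} → Option {y // y ∈ Y}) :=
        Nat.card_le_card_of_injective Ψ hΨinj
    _ = (Y.card + 1) ^ X.card := by
        rw [Nat.card_eq_fintype_card, Fintype.card_fun, Fintype.card_option,
          Fintype.card_coe, Fintype.card_coe]


end NPM

/-- For all `0 < ε < p² ≤ 1` there is `n₀` such that for every bipartite
`ε`-regular graph `G` with density `p` and parts of size `n`, where `2n > n₀`,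
`(1-3√ε)·n·log(pn) ≤ log NM(G,√ε) ≤ (1+3√ε)·n·log(pn)`. -/
theorem count_near_perfect_matchings_bipartite_regular :
    ∀ ε p : ℝ, 0 < ε → ε < p ^ 2 → p ^ 2 ≤ 1 →
    ∃ n₀ : ℕ, ∀ (V : Type) [Fintype V] [DecidableEq V]
      (G : SimpleGraph V) [DecidableRel G.Adj],
      ∀ (X Y : Finset V) (n : ℕ),
      2 * n > n₀ →
      X.card = n → Y.card = n → Disjoint X Y →
      (∀ v : V, v ∈ X ∨ v ∈ Y) →
      (∀ u v : V, G.Adj u v → (u ∈ X ∧ v ∈ Y) ∨ (u ∈ Y ∧ v ∈ X)) →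
      (∀ X' ⊆ X, ∀ Y' ⊆ Y,
        ε * (X.card : ℝ) ≤ (X'.card : ℝ) → ε * (Y.card : ℝ) ≤ (Y'.card : ℝ) →
        |((G.edgeDensity X' Y' : ℚ) : ℝ) - p| ≤ ε) →
      (1 - 3 * Real.sqrt ε) * (n : ℝ) * Real.log (p * n) ≤
          Real.log (NM V G (Real.sqrt ε)) ∧
        Real.log (NM V G (Real.sqrt ε)) ≤
          (1 + 3 * Real.sqrt ε) * (n : ℝ) * Real.log (p * n) := by
  intro ε p hε hεp hp1
  classical
  have hε1 : ε < 1 := lt_of_lt_of_le hεp hp1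
  set q := Real.sqrt ε with hqdef
  have hq0 : 0 < q := Real.sqrt_pos.mpr hε
  have hq1 : q < 1 := by
    rw [hqdef, show (1:ℝ) = Real.sqrt 1 by rw [Real.sqrt_one]]
    exact Real.sqrt_lt_sqrt hε.le hε1
  have hεq : ε < q := by
    rw [hqdef]
    exact (Real.lt_sqrt hε.le).mpr (by nlinarith)
  set w : ℝ := (p - ε) * q / (2 * p) with hwdef
  set C : ℝ := -Real.log w with hCdef
  set E : ℝ := Real.exp (C + C / (2 * q) + Real.log (2 / p) / (3 * q)) with hEdef
  set R : ℝ := max (max (E / p) (2 / q)) (max (1 / (q - ε)) 1) with hRdef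
  refine ⟨2 * (⌈R⌉₊ + 1), ?_⟩
  intro V _ _ G _ X Y n hn hX hY hXY hcover hadj hreg
  -- basic numeric facts about n
  have hnR : R < (n : ℝ) := by
    have h1 : ⌈R⌉₊ + 2 ≤ n := by omega
    have h2 : ((⌈R⌉₊ : ℝ) + 2 : ℝ) ≤ (n : ℝ) := by exact_mod_cast h1
    nlinarith [Nat.le_ceil R]
  have hR1 : (1:ℝ) ≤ R := le_trans (le_max_right (1/(q-ε)) 1) (le_max_right _ _)
  have hn1 : (1:ℝ) ≤ (n:ℝ) := by linarith
  have hn0 : (0:ℝ) ≤ (n:ℝ) := by linarith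
  -- p is positive
  have hd0 : (0:ℝ) ≤ ((G.edgeDensity X Y : ℚ) : ℝ) := by
    have := Rel.edgeDensity_nonneg G.Adj X Y
    exact_mod_cast this
  have habs := hreg X (Finset.Subset.refl X) Y (Finset.Subset.refl Y)
    (by nlinarith [(Nat.cast_nonneg X.card : (0:ℝ) ≤ (X.card:ℝ))] : ε * (X.card:ℝ) ≤ (X.card:ℝ))
    (by nlinarith [(Nat.cast_nonneg Y.card : (0:ℝ) ≤ (Y.card:ℝ))] : ε * (Y.card:ℝ) ≤ (Y.card:ℝ))
  have hp0 : 0 < p := by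
    obtain ⟨-, h2⟩ := abs_le.mp habs
    by_contra hple
    push_neg at hple
    nlinarith [mul_nonneg (neg_nonneg.mpr hple) (show (0:ℝ) ≤ ε + p by nlinarith)]
  have hple1 : p ≤ 1 := by nlinarith
  have hpε : 0 < p - ε := by nlinarith
  have hqp : q < p := by
    rw [hqdef]
    have := Real.sqrt_lt_sqrt hε.le hεp
    rwa [Real.sqrt_sq hp0.le] at this
  -- constants
  have hw0 : 0 < w := by rw [hwdef]; positivity
  have hw1 : w < 1 := by
    rw [hwdef, div_lt_one (by positivity)]
    nlinarith
  have hC0 : 0 < C := by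
    rw [hCdef, neg_pos]
    exact Real.log_neg hw0 hw1
  have hlog2p : 0 < Real.log (2 / p) :=
    Real.log_pos ((one_lt_div hp0).mpr (by linarith))
  have hpos1 : 0 ≤ C / (2 * q) := by positivity
  have hpos2 : 0 ≤ Real.log (2 / p) / (3 * q) := by positivity
  -- consequences of n > R
  have hEp : E / p < (n:ℝ) :=
    lt_of_le_of_lt (le_trans (le_max_left _ _) (le_max_left _ _)) hnR
  have hpnE : E < p * n := by
    rw [div_lt_iff₀ hp0] at hEp
    linarith [hEp]
  have hqn2 : 2 < q * n := by
    have h := lt_of_le_of_lt (le_trans (le_max_right (E/p) (2/q)) (le_max_left _ _)) hnR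
    rw [div_lt_iff₀ hq0] at h
    linarith
  have hqεn : 1 < (q - ε) * n := by
    have h := lt_of_le_of_lt (le_trans (le_max_left (1/(q-ε)) 1) (le_max_right _ _)) hnR
    rw [div_lt_iff₀ (by linarith : (0:ℝ) < q - ε)] at h
    linarith
  set L := Real.log (p * n) with hLdef
  have hpn0 : (0:ℝ) < p * n := by positivity
  have hL : C + C / (2 * q) + Real.log (2 / p) / (3 * q) ≤ L := by
    rw [hLdef]
    calc C + C / (2 * q) + Real.log (2 / p) / (3 * q) = Real.log E := by
          rw [hEdef, Real.log_exp]
      _ ≤ Real.log (p * n) := Real.log_le_log (Real.exp_pos _) hpnE.le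
  -- t and r
  set t := ⌈(1 - q) * (n:ℝ)⌉₊ with htdef
  have h1q : (0:ℝ) ≤ (1 - q) * (n:ℝ) := mul_nonneg (by linarith) hn0
  have ht_le : t ≤ n := Nat.ceil_le.mpr (by nlinarith only [mul_nonneg hq0.le hn0])
  have ht_ge : (1 - q) * (n:ℝ) ≤ (t:ℝ) := Nat.le_ceil _
  have ht_ub : (t:ℝ) ≤ (1 - q) * n + 1 := le_of_lt (Nat.ceil_lt_add_one h1q)
  set r := n - t with hrdef
  have hrcast : (r:ℝ) = (n:ℝ) - (t:ℝ) := by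
    rw [hrdef]
    exact Nat.cast_sub ht_le
  have hr_qn : q * n / 2 ≤ (r:ℝ) := by rw [hrcast]; linarith only [ht_ub, hqn2]
  have hr_εn : ε * n ≤ (r:ℝ) := by rw [hrcast]; linarith only [ht_ub, hqεn]
  have hr1 : (1:ℝ) ≤ (r:ℝ) := by linarith only [hr_qn, hqn2]
  -- edge counting from regularity
  have hB : ∀ k < t, ∀ X' ⊆ X, ∀ Y' ⊆ Y, X'.card = X.card - k → Y'.card = Y.card - k →
      (fun k => ⌈(p - ε) * ((n - k : ℕ):ℝ)^2⌉₊) k ≤ (Rel.interedges G.Adj X' Y').card := by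
    intro k hk X' hX' Y' hY' hX'c hY'c
    have hXc : X'.card = n - k := by rw [hX'c, hX]
    have hYc : Y'.card = n - k := by rw [hY'c, hY]
    have hge : (r:ℝ) ≤ ((n - k : ℕ):ℝ) := by
      have : r ≤ n - k := Nat.sub_le_sub_left hk.le n
      exact_mod_cast this
    have hcard_pos : (0:ℝ) < ((n - k:ℕ):ℝ) := by linarith
    have hεX : ε * (X.card:ℝ) ≤ (X'.card:ℝ) := by
      rw [hXc, hX]
      linarith
    have hεY : ε * (Y.card:ℝ) ≤ (Y'.card:ℝ) := by
      rw [hYc, hY]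
      linarith
    have habs' := hreg X' hX' Y' hY' hεX hεY
    have hd : p - ε ≤ ((G.edgeDensity X' Y' : ℚ):ℝ) := by
      obtain ⟨h1, -⟩ := abs_le.mp habs'
      linarith
    have hdval : ((G.edgeDensity X' Y' : ℚ):ℝ) =
        ((Rel.interedges G.Adj X' Y').card : ℝ) / (((n-k:ℕ):ℝ) * ((n-k:ℕ):ℝ)) := by
      have hrfl : G.edgeDensity X' Y' =
          ((Rel.interedges G.Adj X' Y').card : ℚ) / ((X'.card : ℚ) * (Y'.card : ℚ)) := rfl
      rw [hrfl]
      push_cast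
      rw [hXc, hYc]
    rw [hdval, le_div_iff₀ (by positivity)] at hd
    refine Nat.ceil_le.mpr ?_
    nlinarith only [hd]
  have hchain := NPM.chain_card G X Y t (fun k => ⌈(p - ε) * ((n - k : ℕ):ℝ)^2⌉₊) hB
  -- the extension map
  set φ : (Fin t → V × V) → Finset (Sym2 V) := fun s =>
    if h : ∃ M, IsMaximalMatchingFinset G M ∧
        (Finset.image (fun i => Sym2.mk (s i).1 (s i).2) Finset.univ) ⊆ M then h.choose else ∅
    with hφdef
  have hφ : ∀ s ∈ NPM.seqFinset G X Y t, IsMaximalMatchingFinset G (φ s) ∧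
      ∀ i, Sym2.mk (s i).1 (s i).2 ∈ φ s := by
    intro s hs
    rw [NPM.seqFinset, Finset.mem_filter] at hs
    have hex : ∃ M, IsMaximalMatchingFinset G M ∧
        (Finset.image (fun i => Sym2.mk (s i).1 (s i).2) Finset.univ) ⊆ M :=
      NPM.exists_maximal _ (NPM.good_matching hXY hs.2)
    rw [hφdef]
    dsimp only
    rw [dif_pos hex]
    exact ⟨hex.choose_spec.1, fun i =>
      hex.choose_spec.2 (Finset.mem_image_of_mem _ (Finset.mem_univ i))⟩
  -- identify NM with a finset cardinality
  set P : Finset (Sym2 V) → Prop := fun M => IsMaximalMatchingFinset G M ∧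
      (1 - q) * (Fintype.card V : ℝ) ≤ (coveredCard M : ℝ) with hPdef
  set F := Finset.univ.filter P with hFdef
  have hNMF : NM V G q = F.card := by
    have h1 : NM V G q = Nat.card {M // P M} := rfl
    rw [h1, hFdef]
    rw [Nat.card_eq_fintype_card]
    simp [hPdef, Fintype.card_subtype]
  have hcV : Fintype.card V = 2 * n := by
    have hunion : X ∪ Y = Finset.univ :=
      Finset.eq_univ_iff_forall.mpr (fun v => Finset.mem_union.mpr (hcover v))
    rw [← Finset.card_univ, ← hunion, Finset.card_union_of_disjoint hXY, hX, hY]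
    ring
  have hmaps : ∀ s ∈ NPM.seqFinset G X Y t, φ s ∈ F := by
    intro s hs
    have hsgood : NPM.Good G X Y t s := by
      rw [NPM.seqFinset, Finset.mem_filter] at hs
      exact hs.2
    rw [hFdef, Finset.mem_filter]
    refine ⟨Finset.mem_univ _, (hφ s hs).1, ?_⟩
    have hcov : 2 * t ≤ coveredCard (φ s) := NPM.covered_ge hXY hsgood (hφ s hs).2
    have hcov' : (2 * t : ℝ) ≤ (coveredCard (φ s) : ℝ) := by exact_mod_cast hcov
    rw [hcV]
    push_cast
    linarith only [ht_ge, hcov']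
  have hfib : ∀ M ∈ F, ((NPM.seqFinset G X Y t).filter (fun s => φ s = M)).card ≤
      n.descFactorial t := by
    intro M hM
    rw [hFdef, Finset.mem_filter] at hM
    have hMmatch : IsMatchingFinset G M := hM.2.1.1
    have hsub : (NPM.seqFinset G X Y t).filter (fun s => φ s = M) ⊆
        (NPM.seqFinset G X Y t).filter (fun s => ∀ i, Sym2.mk (s i).1 (s i).2 ∈ M) := by
      intro s hs
      rw [Finset.mem_filter] at hs ⊢
      exact ⟨hs.1, fun i => hs.2 ▸ (hφ s hs.1).2 i⟩
    calc ((NPM.seqFinset G X Y t).filter (fun s => φ s = M)).card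
        ≤ ((NPM.seqFinset G X Y t).filter (fun s => ∀ i, Sym2.mk (s i).1 (s i).2 ∈ M)).card :=
          Finset.card_le_card hsub
      _ ≤ M.card.descFactorial t := NPM.fiber_card_le hXY t M
      _ ≤ n.descFactorial t := Nat.descFactorial_le t
          (by rw [← hX]; exact NPM.matching_card_le hadj hMmatch)
  have hcount : (NPM.seqFinset G X Y t).card ≤ n.descFactorial t * F.card :=
    Finset.card_le_mul_card_image_of_maps_to hmaps _ hfib
  -- real-number chain
  set D := n.descFactorial t with hDdef
  have hD0 : 0 < D := by
    rw [hDdef]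
    exact Nat.pos_of_ne_zero (fun h =>
      absurd (Nat.descFactorial_eq_zero_iff_lt.mp h) (not_lt.mpr ht_le))
  have hD0' : (0:ℝ) < (D:ℝ) := by exact_mod_cast hD0
  have hDprod : (D:ℝ) = ∏ k ∈ Finset.range t, ((n - k:ℕ):ℝ) := by
    rw [hDdef, Nat.descFactorial_eq_prod_range, Nat.cast_prod]
  have hDr : ((r:ℝ))^t ≤ (D:ℝ) := by
    rw [hDprod]
    calc ((r:ℝ))^t = ∏ _k ∈ Finset.range t, (r:ℝ) := by
          rw [Finset.prod_const, Finset.card_range]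
      _ ≤ ∏ k ∈ Finset.range t, ((n - k:ℕ):ℝ) := by
          refine Finset.prod_le_prod (fun _ _ => by linarith) ?_
          intro k hk
          have : r ≤ n - k := Nat.sub_le_sub_left (Finset.mem_range.mp hk).le n
          exact_mod_cast this
  have hprod : (p-ε)^t * (D:ℝ)^2 ≤
      ((∏ k ∈ Finset.range t, ⌈(p - ε) * ((n - k : ℕ):ℝ)^2⌉₊ : ℕ):ℝ) := by
    rw [Nat.cast_prod]
    calc (p-ε)^t * (D:ℝ)^2 = ∏ k ∈ Finset.range t, ((p-ε) * ((n - k:ℕ):ℝ)^2) := by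
          rw [Finset.prod_mul_distrib, Finset.prod_const, Finset.card_range,
            Finset.prod_pow, hDprod]
      _ ≤ ∏ k ∈ Finset.range t, ((⌈(p - ε) * ((n - k : ℕ):ℝ)^2⌉₊ : ℕ):ℝ) := by
          refine Finset.prod_le_prod (fun _ _ => by positivity) ?_
          intro k _
          exact Nat.le_ceil _
  have hkey : (p-ε)^t * (D:ℝ)^2 ≤ (D:ℝ) * (NM V G q : ℝ) := by
    calc (p-ε)^t * (D:ℝ)^2
        ≤ ((∏ k ∈ Finset.range t, ⌈(p - ε) * ((n - k : ℕ):ℝ)^2⌉₊ : ℕ):ℝ) := hprod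
      _ ≤ ((NPM.seqFinset G X Y t).card : ℝ) := by exact_mod_cast hchain
      _ ≤ ((n.descFactorial t * F.card : ℕ) : ℝ) := by exact_mod_cast hcount
      _ = (D:ℝ) * (NM V G q : ℝ) := by rw [hNMF, hDdef]; push_cast; ring
  set β := (p - ε) * (r:ℝ) with hβdef
  have hNMβ : β^t ≤ (NM V G q : ℝ) := by
    have h1 : β^t * (D:ℝ) ≤ (D:ℝ) * (NM V G q:ℝ) := by
      calc β^t * (D:ℝ) = (p-ε)^t * (((r:ℝ))^t * (D:ℝ)) := by rw [hβdef, mul_pow]; ring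
        _ ≤ (p-ε)^t * ((D:ℝ) * (D:ℝ)) := by
            refine mul_le_mul_of_nonneg_left ?_ (by positivity)
            exact mul_le_mul_of_nonneg_right hDr hD0'.le
        _ = (p-ε)^t * (D:ℝ)^2 := by ring
        _ ≤ (D:ℝ) * (NM V G q:ℝ) := hkey
    rw [mul_comm (D:ℝ)] at h1
    exact le_of_mul_le_mul_right h1 hD0'
  -- β is at least 1 and log β ≥ L - C
  have hexpC : Real.exp C = w⁻¹ := by rw [hCdef, Real.exp_neg, Real.exp_log hw0]
  have hwE : w⁻¹ ≤ p * n := by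
    rw [← hexpC]
    calc Real.exp C ≤ E := by
          rw [hEdef]
          exact Real.exp_le_exp.mpr (by linarith)
      _ ≤ p * n := hpnE.le
  have hpnw1 : 1 ≤ p * n * w := by
    have h := mul_le_mul_of_nonneg_right hwE hw0.le
    rw [inv_mul_cancel₀ hw0.ne'] at h
    linarith
  have hpnwβ : p * n * w ≤ β := by
    have h2 : (p - ε) * (q * n / 2) = p * n * w := by
      rw [hwdef]
      field_simp
    rw [hβdef, ← h2]
    exact mul_le_mul_of_nonneg_left hr_qn hpε.le
  have hβ1 : 1 ≤ β := le_trans hpnw1 hpnwβ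
  have hβ0 : (0:ℝ) < β := lt_of_lt_of_le zero_lt_one hβ1
  have hlogβ : L - C ≤ Real.log β := by
    calc L - C = Real.log (p*n) + Real.log w := by rw [hCdef, hLdef]; ring
      _ = Real.log (p*n*w) := (Real.log_mul hpn0.ne' hw0.ne').symm
      _ ≤ Real.log β := Real.log_le_log (mul_pos hpn0 hw0) hpnwβ
  -- lower bound
  have hLC : 0 ≤ L - C := by linarith
  have hlogNM : (t:ℝ) * (L - C) ≤ Real.log (NM V G q) := by
    calc (t:ℝ) * (L - C) ≤ (t:ℝ) * Real.log β :=
          mul_le_mul_of_nonneg_left hlogβ (Nat.cast_nonneg t)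
      _ = Real.log (β^t) := (Real.log_pow β t).symm
      _ ≤ Real.log (NM V G q) := Real.log_le_log (by positivity) hNMβ
  have hC2q : C ≤ 2*q*(L - C) := by
    have h1 : C/(2*q) ≤ L - C := by linarith
    calc C = 2*q*(C/(2*q)) := by field_simp
      _ ≤ 2*q*(L - C) := mul_le_mul_of_nonneg_left h1 (by positivity)
  have hlow : (1 - 3*q) * (n:ℝ) * L ≤ Real.log (NM V G q) := by
    linarith only [mul_nonneg (sub_nonneg.mpr ht_ge) hLC,
      mul_nonneg hn0 (sub_nonneg.mpr hC2q),
      mul_nonneg hn0 (mul_nonneg hq0.le hC0.le), hlogNM]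
  -- upper bound
  have hNMle : NM V G q ≤ (n+1)^n := by
    have h := NPM.NM_le hadj q
    rwa [hX, hY] at h
  have hup : Real.log (NM V G q) ≤ (1 + 3*q) * (n:ℝ) * L := by
    have hlog1 : Real.log (NM V G q) ≤ (n:ℝ) * Real.log ((n:ℝ)+1) := by
      rcases Nat.eq_zero_or_pos (NM V G q) with h0 | hpos
      · rw [h0]
        push_cast
        rw [Real.log_zero]
        exact mul_nonneg hn0 (Real.log_nonneg (by linarith))
      · calc Real.log (NM V G q) ≤ Real.log (((n+1)^n : ℕ):ℝ) :=
              Real.log_le_log (by exact_mod_cast hpos) (by exact_mod_cast hNMle)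
          _ = (n:ℝ) * Real.log ((n:ℝ)+1) := by push_cast; rw [Real.log_pow]
    have h2n : Real.log ((n:ℝ)+1) ≤ Real.log 2 + Real.log n := by
      calc Real.log ((n:ℝ)+1) ≤ Real.log (2*n) :=
            Real.log_le_log (by linarith) (by linarith)
        _ = Real.log 2 + Real.log n := Real.log_mul two_ne_zero (by linarith)
    have hnL : (n:ℝ) * L = (n:ℝ) * Real.log p + (n:ℝ) * Real.log n := by
      rw [hLdef, Real.log_mul hp0.ne' (by linarith : (n:ℝ) ≠ 0)]
      ring
    have h3qL : Real.log 2 - Real.log p ≤ 3*q*L := by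
      have h1 : Real.log (2/p) / (3*q) ≤ L := by linarith
      have h2 : Real.log (2/p) = Real.log 2 - Real.log p :=
        Real.log_div two_ne_zero hp0.ne'
      calc Real.log 2 - Real.log p = 3*q*(Real.log (2/p)/(3*q)) := by
            rw [h2]; field_simp
        _ ≤ 3*q*L := mul_le_mul_of_nonneg_left h1 (by positivity)
    linarith only [hlog1, mul_le_mul_of_nonneg_left h2n hn0,
      mul_le_mul_of_nonneg_left h3qL hn0, hnL]
  exact ⟨hlow, hup⟩
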